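/- Let F be a field, V an infinite-dimensional F-vector space with basis (e_i)_{i∈I}, V* its dual, V̄ = V ⊕ V*, and f the alternating bilinear form on V̄ given by f((a,α),(b,β)) = α(b) − β(a). For i ∈ I let η_i ∈ V* be determined by η_i(e_j) = δ_{ij}, and let W = span{(e_i, η_i) : i ∈ I} ≤ V̄. Then W is a generator of S_f (a maximal totally f-isotropic subspace), W ∩ (V ⊕ 0) = 0, and W + (V ⊕ 0) is a proper subspace of V̄. In particular S_f admits a pair of opposite generators which is not a complementary pair. -/

import Mathlib

/-- The symplectic form `f((a,α),(b,β)) = α(b) − β(a)` on `V̄ = V ⊕ V*`. -/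
def symForm {F V : Type*} [Field F] [AddCommGroup V] [Module F V]
    (p q : V × Module.Dual F V) : F :=
  p.2 q.1 - q.2 p.1

/-- A subspace of `V̄` is totally `f`-isotropic. -/
def SymTotIso {F V : Type*} [Field F] [AddCommGroup V] [Module F V]
    (W : Submodule F (V × Module.Dual F V)) : Prop :=
  ∀ x ∈ W, ∀ y ∈ W, symForm x y = 0

/-- A generator of the symplectic polar space `S_f`: a maximal totally
`f`-isotropic subspace of `V̄`. -/
def SymGen {F V : Type*} [Field F] [AddCommGroup V] [Module F V]
    (W : Submodule F (V × Module.Dual F V)) : Prop :=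
  SymTotIso W ∧
    ∀ W' : Submodule F (V × Module.Dual F V), SymTotIso W' → W ≤ W' → W' = W

section Aux

variable {F V : Type*} [Field F] [AddCommGroup V] [Module F V]
    {I : Type*} (b : Module.Basis I F V)

/-- The linear map `V → V*` sending `e_i ↦ η_i`. -/
noncomputable def betaMap : V →ₗ[F] Module.Dual F V :=
  b.constr F fun i => b.coord i

lemma betaMap_basis (i : I) : betaMap b (b i) = b.coord i := by
  simp [betaMap]

lemma betaMap_flip : (betaMap b).flip = betaMap b := by
  apply b.ext; intro i
  apply b.ext; intro j
  classical
  simp only [LinearMap.flip_apply, betaMap_basis, Module.Basis.coord_apply, Module.Basis.repr_self]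
  rw [Finsupp.single_apply, Finsupp.single_apply]
  exact if_congr eq_comm rfl rfl

lemma betaMap_symm (v w : V) : betaMap b v w = betaMap b w v := by
  conv_rhs => rw [← betaMap_flip b]
  rfl

/-- `v ↦ (v, β v)`. -/
noncomputable def graphMap : V →ₗ[F] V × Module.Dual F V :=
  LinearMap.prod LinearMap.id (betaMap b)

lemma graphMap_apply (v : V) : graphMap b v = (v, betaMap b v) := rfl

lemma span_eq_range :
    Submodule.span F (Set.range fun i : I => ((b i, b.coord i) : V × Module.Dual F V)) =
      LinearMap.range (graphMap b) := by
  have h : (fun i : I => ((b i, b.coord i) : V × Module.Dual F V)) =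
      fun i => graphMap b (b i) := by
    funext i
    simp [graphMap_apply, betaMap_basis]
  rw [h, ← Function.comp_def, Set.range_comp, ← Submodule.map_span, b.span_eq,
    Submodule.map_top]

end Aux

/-- For a basis `(e_i)` of an infinite-dimensional `V` and the coordinate
functionals `η_i`, the span `W` of the vectors `(e_i, η_i)` is a generator of `S_f`
which is opposite to, but not a complement of, the generator `V ⊕ 0`. -/
theorem stmt_9 {F V : Type*} [Field F] [AddCommGroup V] [Module F V]
    {I : Type*} [Infinite I] (b : Module.Basis I F V) :
    SymGen (Submodule.span F
      (Set.range fun i : I => ((b i, b.coord i) : V × Module.Dual F V))) ∧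
    Submodule.span F (Set.range fun i : I => ((b i, b.coord i) : V × Module.Dual F V)) ⊓
      (⊤ : Submodule F V).prod (⊥ : Submodule F (Module.Dual F V)) = ⊥ ∧
    Submodule.span F (Set.range fun i : I => ((b i, b.coord i) : V × Module.Dual F V)) ⊔
      (⊤ : Submodule F V).prod (⊥ : Submodule F (Module.Dual F V)) ≠ ⊤ := by
  rw [span_eq_range]
  refine ⟨⟨?_, ?_⟩, ?_, ?_⟩
  · -- totally isotropic
    rintro x ⟨u, rfl⟩ y ⟨w, rfl⟩
    simp only [graphMap_apply, symForm]
    rw [betaMap_symm, sub_self]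
  · -- maximal
    intro W' hIso hle
    refine le_antisymm ?_ hle
    rintro ⟨v, φ⟩ hx
    have hφ : ∀ i, φ (b i) = b.coord i v := by
      intro i
      have h := hIso _ (hle ⟨b i, rfl⟩) _ hx
      simp only [graphMap_apply, symForm, betaMap_basis] at h
      exact (sub_eq_zero.mp h).symm
    refine ⟨v, ?_⟩
    rw [graphMap_apply]
    refine Prod.ext rfl ?_
    apply b.ext; intro i
    rw [betaMap_symm, betaMap_basis, hφ]
  · -- trivial intersection
    rw [eq_bot_iff]
    intro x hx
    rw [Submodule.mem_inf] at hx
    obtain ⟨⟨v, rfl⟩, hx2⟩ := hx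
    rw [Submodule.mem_prod] at hx2
    have hβ : betaMap b v = 0 := hx2.2
    have hv : v = 0 := by
      rw [← b.forall_coord_eq_zero_iff]
      intro i
      rw [Module.Basis.coord_apply, ← Module.Basis.coord_apply, ← betaMap_basis, ← betaMap_symm, hβ]
      rfl
    simp [graphMap_apply, hv]
  · -- sum is proper
    intro h
    set φ : Module.Dual F V := b.constr F fun _ : I => (1 : F) with hφdef
    have hmem : ((0 : V), φ) ∈ LinearMap.range (graphMap b) ⊔
        (⊤ : Submodule F V).prod (⊥ : Submodule F (Module.Dual F V)) := by
      rw [h]; trivial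
    obtain ⟨y, hy, z, hz, hyz⟩ := Submodule.mem_sup.mp hmem
    obtain ⟨v, rfl⟩ := hy
    rw [Submodule.mem_prod] at hz
    have hz2 : z.2 = 0 := hz.2
    have hφβ : φ = betaMap b v := by
      have := congrArg Prod.snd hyz
      simp only [graphMap_apply, Prod.snd_add, hz2, add_zero] at this
      exact this.symm
    obtain ⟨i, hi⟩ := Infinite.exists_notMem_finset (b.repr v).support
    have h1 : φ (b i) = 1 := by rw [hφdef, Module.Basis.constr_basis]
    have h0 : φ (b i) = 0 := by
      rw [hφβ, betaMap_symm, betaMap_basis, Module.Basis.coord_apply]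
      exact Finsupp.notMem_support_iff.mp hi
    rw [h1] at h0
    exact one_ne_zero h0
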